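/- arXiv:2401.10992 — 3 statements merged into one kernel-verified Lean document; each statement's English description precedes it below -/
import Mathlib

section
/- Let p ∈ (0,∞), let x_3 < x_1 and y_1 < y_2 be reals, and for u ∈ ℝ set Δ(u) := conv{(x_1,y_1),(u,y_2),(x_3,y_1)} ⊂ ℝ². For all weights r, τ, σ > 0 with 2/r = 1/τ + 1/σ, and all x_2, x_2', x, y, y' ∈ ℝ: h_{p,Δ((x_2+x_2')/2)}( r·(x, (y+y')/2) ) ≤ (σ/(τ+σ))·h_{p,Δ(x_2)}( τ·(x,y) ) + (τ/(τ+σ))·h_{p,Δ(x_2')}( σ·(x,y') ). -/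
open MeasureTheory Set

/-- The `L^p`-support function of a body `K ⊆ ℝ²`. -/
noncomputable def suppFn (p : ℝ) (K : Set (ℝ × ℝ)) (y : ℝ × ℝ) : ℝ :=
  (1 / p) * Real.log ((∫ x in K, Real.exp (p * (x.1 * y.1 + x.2 * y.2))) / (volume K).toReal)

/-- The `L^p`-Mahler volume of `K ⊆ ℝ²`. -/
noncomputable def mahlerVol (p : ℝ) (K : Set (ℝ × ℝ)) : ℝ :=
  (volume K).toReal * ∫ y, Real.exp (-(suppFn p K y))

/-- The near norm of the `L^p`-polar body, for `n = 2`. -/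
noncomputable def nearNorm (p : ℝ) (K : Set (ℝ × ℝ)) (y : ℝ × ℝ) : ℝ :=
  if y = 0 then 0
  else (∫ r in Set.Ioi (0 : ℝ), r * Real.exp (-(suppFn p K (r • y)))) ^ (-(1 / 2 : ℝ))

/-- The `L^p`-polar body of `K ⊆ ℝ²`. -/
noncomputable def lpPolar (p : ℝ) (K : Set (ℝ × ℝ)) : Set (ℝ × ℝ) :=
  {y | nearNorm p K y ≤ 1}

namespace TriangleAux

open scoped ENNReal NNReal

/-- Shear-and-translate map as a measurable equivalence of `ℝ × ℝ`. -/
def shearEquiv (c t : ℝ) : (ℝ × ℝ) ≃ᵐ (ℝ × ℝ) :=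
  { toFun := fun z => (z.1 + c * z.2 + t, z.2)
    invFun := fun z => (z.1 - c * z.2 - t, z.2)
    left_inv := fun z => by cases z with | mk a b => exact Prod.ext_iff.mpr ⟨by ring, rfl⟩
    right_inv := fun z => by cases z with | mk a b => exact Prod.ext_iff.mpr ⟨by ring, rfl⟩
    measurable_toFun := by
      exact ((measurable_fst.add (measurable_snd.const_mul c)).add measurable_const).prodMk
        measurable_snd
    measurable_invFun := by
      exact ((measurable_fst.sub (measurable_snd.const_mul c)).sub measurable_const).prodMk
        measurable_snd }

@[simp] lemma shearEquiv_apply (c t : ℝ) (z : ℝ × ℝ) :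
    shearEquiv c t z = (z.1 + c * z.2 + t, z.2) := rfl

@[simp] lemma shearEquiv_symm_apply (c t : ℝ) (z : ℝ × ℝ) :
    (shearEquiv c t).symm z = (z.1 - c * z.2 - t, z.2) := rfl

lemma shear_mp (c t : ℝ) :
    MeasurePreserving (fun z : ℝ × ℝ => (z.1 + c * z.2 + t, z.2)) volume volume := by
  have h1 : MeasurePreserving (fun q : ℝ × ℝ => (q.1, q.2 + c * q.1))
      ((volume : Measure ℝ).prod (volume : Measure ℝ))
      ((volume : Measure ℝ).prod (volume : Measure ℝ)) :=
    (MeasurePreserving.id volume).skew_product (g := fun a y => y + c * a)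
      (measurable_snd.add (measurable_fst.const_mul c))
      (Filter.Eventually.of_forall fun a =>
        (measurePreserving_add_right volume (c * a)).map_eq)
  have hswap : MeasurePreserving (Prod.swap : ℝ × ℝ → ℝ × ℝ)
      ((volume : Measure ℝ).prod volume) ((volume : Measure ℝ).prod volume) :=
    Measure.measurePreserving_swap
  have h2 : MeasurePreserving (fun z : ℝ × ℝ => (z.1 + c * z.2, z.2))
      ((volume : Measure ℝ).prod volume) ((volume : Measure ℝ).prod volume) := by
    have := (hswap.comp h1).comp hswap
    convert this using 1
    funext z
    rfl
  have h3 : MeasurePreserving (fun z : ℝ × ℝ => z + (t, 0))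
      ((volume : Measure ℝ).prod volume) ((volume : Measure ℝ).prod volume) :=
    measurePreserving_add_right _ _
  have h4 := h3.comp h2
  rw [← Measure.volume_eq_prod] at h4
  convert h4 using 1
  · rfl
  · rfl
  funext z
  simp [Prod.ext_iff]

lemma shearEquiv_symm_mp (c t : ℝ) :
    MeasurePreserving (⇑(shearEquiv c t).symm) volume volume := by
  have h := shear_mp (-c) (-t)
  have he : (⇑(shearEquiv c t).symm) = fun z : ℝ × ℝ => (z.1 + -c * z.2 + -t, z.2) := by
    funext z
    rw [shearEquiv_symm_apply]
    exact Prod.ext_iff.mpr ⟨by ring, rfl⟩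
  rw [he]
  exact h

lemma volume_shearEquiv_image (c t : ℝ) {s : Set (ℝ × ℝ)} (hs : MeasurableSet s) :
    volume ((shearEquiv c t) '' s) = volume s := by
  rw [MeasurableEquiv.image_eq_preimage_symm]
  exact (shearEquiv_symm_mp c t).measure_preimage hs.nullMeasurableSet

lemma setIntegral_shearEquiv (c t : ℝ) (s : Set (ℝ × ℝ)) (g : ℝ × ℝ → ℝ) :
    ∫ z in (shearEquiv c t) '' s, g z = ∫ z in s, g (z.1 + c * z.2 + t, z.2) :=
  (shear_mp c t).setIntegral_image_emb (shearEquiv c t).measurableEmbedding g s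

/-- Shear-and-translate as an affine map. -/
noncomputable def shearAff (c t : ℝ) : (ℝ × ℝ) →ᵃ[ℝ] (ℝ × ℝ) where
  toFun z := (z.1 + c * z.2 + t, z.2)
  linear :=
    { toFun := fun z => (z.1 + c * z.2, z.2)
      map_add' := fun u v => Prod.ext_iff.mpr ⟨by simp; ring, by simp⟩
      map_smul' := fun m v => Prod.ext_iff.mpr ⟨by simp; ring, by simp⟩ }
  map_vadd' := fun q v => Prod.ext_iff.mpr ⟨by simp; ring, by simp⟩

lemma shearAff_coe (c t : ℝ) : ⇑(shearAff c t) = ⇑(shearEquiv c t) := rfl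

lemma integral_exp_convex {α : Type*} [MeasurableSpace α] (μ : Measure α)
    {f g : α → ℝ} (hfm : AEMeasurable f μ) (hgm : AEMeasurable g μ)
    (hf : Integrable (fun z => Real.exp (f z)) μ) (hg : Integrable (fun z => Real.exp (g z)) μ)
    {a b : ℝ} (ha : 0 < a) (hb : 0 < b) (hab : a + b = 1) :
    ∫ z, Real.exp (a * f z + b * g z) ∂μ ≤
      (∫ z, Real.exp (f z) ∂μ) ^ a * (∫ z, Real.exp (g z) ∂μ) ^ b := by
  have hconj : Real.HolderConjugate (1 / a) (1 / b) := Real.holderConjugate_iff.mpr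
    ⟨by rw [lt_div_iff₀ ha]; linarith, by
      rw [one_div, one_div, inv_inv, inv_inv]; exact hab⟩
  have hsplit : ∀ z, Real.exp (a * f z + b * g z)
      = Real.exp (f z) ^ a * Real.exp (g z) ^ b := by
    intro z
    rw [Real.exp_add, mul_comm a (f z), mul_comm b (g z), Real.exp_mul, Real.exp_mul]
  have hpt : ∀ z, Real.exp (a * f z + b * g z) ≤ a * Real.exp (f z) + b * Real.exp (g z) := by
    intro z
    rw [hsplit z]
    exact Real.geom_mean_le_arith_mean2_weighted ha.le hb.le (Real.exp_nonneg _)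
      (Real.exp_nonneg _) hab
  have hi : Integrable (fun z => Real.exp (a * f z + b * g z)) μ := by
    refine Integrable.mono' ((hf.const_mul a).add (hg.const_mul b))
      ((Real.measurable_exp.comp_aemeasurable
        ((hfm.const_mul a).add (hgm.const_mul b))).aestronglyMeasurable)
      (Filter.Eventually.of_forall fun z => ?_)
    rw [Real.norm_eq_abs, abs_of_nonneg (Real.exp_nonneg _)]
    exact hpt z
  set F : α → ℝ≥0∞ := fun z => ENNReal.ofReal (Real.exp (f z)) with hFdef
  set G : α → ℝ≥0∞ := fun z => ENNReal.ofReal (Real.exp (g z)) with hGdef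
  have hFm : AEMeasurable F μ :=
    ENNReal.measurable_ofReal.comp_aemeasurable (Real.measurable_exp.comp_aemeasurable hfm)
  have hGm : AEMeasurable G μ :=
    ENNReal.measurable_ofReal.comp_aemeasurable (Real.measurable_exp.comp_aemeasurable hgm)
  have key := ENNReal.lintegral_mul_le_Lp_mul_Lq μ hconj
    (hFm.pow_const a) (hGm.pow_const b)
  have e1 : ∀ z, ((fun z => F z ^ a) * fun z => G z ^ b) z
      = ENNReal.ofReal (Real.exp (a * f z + b * g z)) := by
    intro z
    show F z ^ a * G z ^ b = _
    rw [hsplit z, ENNReal.ofReal_mul (Real.rpow_nonneg (Real.exp_nonneg _) _),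
      ← ENNReal.ofReal_rpow_of_nonneg (Real.exp_nonneg _) ha.le,
      ← ENNReal.ofReal_rpow_of_nonneg (Real.exp_nonneg _) hb.le]
  have e2 : ∀ z, (F z ^ a) ^ (1 / a : ℝ) = F z := by
    intro z
    rw [← ENNReal.rpow_mul, mul_one_div_cancel ha.ne', ENNReal.rpow_one]
  have e3 : ∀ z, (G z ^ b) ^ (1 / b : ℝ) = G z := by
    intro z
    rw [← ENNReal.rpow_mul, mul_one_div_cancel hb.ne', ENNReal.rpow_one]
  simp only [e1, e2, e3, one_div_one_div] at key
  rw [← ofReal_integral_eq_lintegral_ofReal hi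
      (Filter.Eventually.of_forall fun z => Real.exp_nonneg _),
    ← ofReal_integral_eq_lintegral_ofReal hf
      (Filter.Eventually.of_forall fun z => Real.exp_nonneg _),
    ← ofReal_integral_eq_lintegral_ofReal hg
      (Filter.Eventually.of_forall fun z => Real.exp_nonneg _),
    ENNReal.ofReal_rpow_of_nonneg (integral_nonneg fun z => Real.exp_nonneg _) ha.le,
    ENNReal.ofReal_rpow_of_nonneg (integral_nonneg fun z => Real.exp_nonneg _) hb.le,
    ← ENNReal.ofReal_mul (Real.rpow_nonneg (integral_nonneg fun z => Real.exp_nonneg _) _)]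
    at key
  exact (ENNReal.ofReal_le_ofReal_iff (by positivity)).mp key

end TriangleAux

/-- Claim 4.5: the joint `convexity' inequality for the `L^p`-support
functions of the family of sliding triangles `Δ(u) = conv{(x₁,y₁),(u,y₂),(x₃,y₁)}`. -/
theorem triangle_suppFn_sliding_convexity (p : ℝ) (hp : 0 < p)
    (x1 x3 y1 y2 : ℝ) (hx : x3 < x1) (hy : y1 < y2)
    (Δ : ℝ → Set (ℝ × ℝ))
    (hΔ : ∀ u, Δ u = convexHull ℝ ({(x1, y1), (u, y2), (x3, y1)} : Set (ℝ × ℝ)))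
    (r τ σ : ℝ) (hr : 0 < r) (hτ : 0 < τ) (hσ : 0 < σ)
    (hw : 2 / r = 1 / τ + 1 / σ)
    (x2 x2' x y y' : ℝ) :
    suppFn p (Δ ((x2 + x2') / 2)) (r • ((x : ℝ), (y + y') / 2)) ≤
      (σ / (τ + σ)) * suppFn p (Δ x2) (τ • ((x : ℝ), y)) +
      (τ / (τ + σ)) * suppFn p (Δ x2') (σ • ((x : ℝ), y')) := by
  have hh : (0 : ℝ) < y2 - y1 := sub_pos.mpr hy
  have hhne : (y2 - y1) ≠ 0 := hh.ne'
  have hxne : (x3 - x1) ≠ 0 := sub_ne_zero.mpr hx.ne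
  have hστ : (0 : ℝ) < τ + σ := by linarith
  have hrw : r * (τ + σ) = 2 * (τ * σ) := by
    field_simp at hw
    linarith [hw]
  -- the base triangle
  set T : Set (ℝ × ℝ) :=
    convexHull ℝ ({(x1, y1), ((0 : ℝ), y2), (x3, y1)} : Set (ℝ × ℝ)) with hTdef
  have hTcpt : IsCompact T := (Set.toFinite _).isCompact_convexHull ℝ
  have hTmeas : MeasurableSet T := hTcpt.isClosed.measurableSet
  -- each `Δ u` is a sheared copy of `T`
  have himg : ∀ u : ℝ,
      Δ u = (TriangleAux.shearEquiv (u / (y2 - y1)) (-(u / (y2 - y1)) * y1)) '' T := by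
    intro u
    rw [hΔ u, hTdef, ← TriangleAux.shearAff_coe,
      AffineMap.image_convexHull]
    congr 1
    rw [Set.image_insert_eq, Set.image_insert_eq, Set.image_singleton]
    have e1 : TriangleAux.shearAff (u / (y2 - y1)) (-(u / (y2 - y1)) * y1) (x1, y1)
        = ((x1 : ℝ), y1) := by
      show (x1 + u / (y2 - y1) * y1 + -(u / (y2 - y1)) * y1, y1) = _
      exact Prod.ext_iff.mpr ⟨by ring, rfl⟩
    have e2 : TriangleAux.shearAff (u / (y2 - y1)) (-(u / (y2 - y1)) * y1) ((0 : ℝ), y2)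
        = (u, y2) := by
      show ((0 : ℝ) + u / (y2 - y1) * y2 + -(u / (y2 - y1)) * y1, y2) = _
      refine Prod.ext_iff.mpr ⟨?_, rfl⟩
      field_simp
      ring
    have e3 : TriangleAux.shearAff (u / (y2 - y1)) (-(u / (y2 - y1)) * y1) (x3, y1)
        = ((x3 : ℝ), y1) := by
      show (x3 + u / (y2 - y1) * y1 + -(u / (y2 - y1)) * y1, y1) = _
      exact Prod.ext_iff.mpr ⟨by ring, rfl⟩
    rw [e1, e2, e3]
  -- the volumes agree
  have hvol : ∀ u : ℝ, volume (Δ u) = volume T := by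
    intro u
    rw [himg u]
    exact TriangleAux.volume_shearEquiv_image _ _ hTmeas
  -- positivity of the volume of T
  have hspan : affineSpan ℝ ({(x1, y1), ((0 : ℝ), y2), (x3, y1)} : Set (ℝ × ℝ)) = ⊤ := by
    rw [AffineSubspace.affineSpan_eq_top_iff_vectorSpan_eq_top_of_nonempty ℝ (ℝ × ℝ) (ℝ × ℝ)
      (by exact ⟨(x1, y1), by simp⟩)]
    have hBA : ((0 : ℝ) - x1, y2 - y1) ∈
        vectorSpan ℝ ({(x1, y1), ((0 : ℝ), y2), (x3, y1)} : Set (ℝ × ℝ)) := by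
      have := vsub_mem_vectorSpan ℝ
        (show ((0 : ℝ), y2) ∈ ({(x1, y1), ((0 : ℝ), y2), (x3, y1)} : Set (ℝ × ℝ)) by simp)
        (show ((x1 : ℝ), y1) ∈ ({(x1, y1), ((0 : ℝ), y2), (x3, y1)} : Set (ℝ × ℝ)) by simp)
      simpa using this
    have hCA : ((x3 : ℝ) - x1, (0 : ℝ)) ∈
        vectorSpan ℝ ({(x1, y1), ((0 : ℝ), y2), (x3, y1)} : Set (ℝ × ℝ)) := by
      have := vsub_mem_vectorSpan ℝ
        (show ((x3 : ℝ), y1) ∈ ({(x1, y1), ((0 : ℝ), y2), (x3, y1)} : Set (ℝ × ℝ)) by simp)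
        (show ((x1 : ℝ), y1) ∈ ({(x1, y1), ((0 : ℝ), y2), (x3, y1)} : Set (ℝ × ℝ)) by simp)
      simpa using this
    rw [eq_top_iff]
    intro v _
    have hv : v = ((v.1 + x1 * v.2 / (y2 - y1)) / (x3 - x1)) • ((x3 : ℝ) - x1, (0 : ℝ))
        + (v.2 / (y2 - y1)) • ((0 : ℝ) - x1, y2 - y1) := by
      refine Prod.ext_iff.mpr ⟨?_, ?_⟩ <;>
        simp only [Prod.fst_add, Prod.snd_add, Prod.smul_mk, smul_eq_mul] <;>
        field_simp <;> ring
    rw [hv]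
    exact Submodule.add_mem _ (Submodule.smul_mem _ _ hCA) (Submodule.smul_mem _ _ hBA)
  have hTvolpos : 0 < volume T := by
    have hconv : Convex ℝ T := convex_convexHull ℝ _
    have hint : (interior T).Nonempty := by
      rw [hconv.interior_nonempty_iff_affineSpan_eq_top, hTdef, affineSpan_convexHull]
      exact hspan
    exact lt_of_lt_of_le (isOpen_interior.measure_pos volume hint)
      (measure_mono interior_subset)
  have hTvolne : volume T ≠ ⊤ := hTcpt.measure_lt_top.ne
  have hV : 0 < (volume T).toReal := ENNReal.toReal_pos hTvolpos.ne' hTvolne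
  -- integrability and positivity of the basic integrals over T
  have hcont : ∀ a b : ℝ, Continuous (fun z : ℝ × ℝ => Real.exp (p * (z.1 * a + z.2 * b))) := by
    intro a b
    fun_prop
  have hInt : ∀ a b : ℝ,
      IntegrableOn (fun z : ℝ × ℝ => Real.exp (p * (z.1 * a + z.2 * b))) T := by
    intro a b
    exact (hcont a b).continuousOn.integrableOn_compact hTcpt
  have hIpos : ∀ a b : ℝ, 0 < ∫ z in T, Real.exp (p * (z.1 * a + z.2 * b)) := by
    intro a b
    rw [setIntegral_pos_iff_support_of_nonneg_ae
      (Filter.Eventually.of_forall fun z => (Real.exp_pos _).le) (hInt a b)]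
    have hsup : Function.support (fun z : ℝ × ℝ => Real.exp (p * (z.1 * a + z.2 * b)))
        = Set.univ := by
      ext z
      simp [Real.exp_ne_zero]
    rw [hsup, Set.univ_inter]
    exact hTvolpos
  -- the integral over Δ u in terms of an integral over T
  have hI : ∀ u a b : ℝ,
      (∫ z in Δ u, Real.exp (p * (z.1 * a + z.2 * b)))
        = Real.exp (-(p * a * u * y1 / (y2 - y1))) *
          ∫ z in T, Real.exp (p * (z.1 * a + z.2 * (b + a * u / (y2 - y1)))) := by
    intro u a b
    rw [himg u, TriangleAux.setIntegral_shearEquiv, ← integral_const_mul]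
    refine setIntegral_congr_fun hTmeas fun z _ => ?_
    rw [← Real.exp_add]
    congr 1
    field_simp
    ring
  -- the support function of Δ u in terms of data over T
  have hsupp : ∀ u a b : ℝ, suppFn p (Δ u) (a, b)
      = (1 / p) * (-(p * a * u * y1 / (y2 - y1)) +
          Real.log (∫ z in T, Real.exp (p * (z.1 * a + z.2 * (b + a * u / (y2 - y1)))))
          - Real.log ((volume T).toReal)) := by
    intro u a b
    show (1 / p) * Real.log ((∫ z in Δ u, Real.exp (p * (z.1 * a + z.2 * b)))
      / (volume (Δ u)).toReal) = _
    rw [hI u a b, hvol u]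
    congr 1
    rw [Real.log_div (mul_pos (Real.exp_pos _) (hIpos _ _)).ne' hV.ne',
      Real.log_mul (Real.exp_ne_zero _) (hIpos _ _).ne', Real.log_exp]
  -- abbreviations for the weights
  set lam : ℝ := σ / (τ + σ) with hlamdef
  set mu : ℝ := τ / (τ + σ) with hmudef
  have hlam : 0 < lam := by positivity
  have hmu : 0 < mu := by positivity
  have hlm : lam + mu = 1 := by
    rw [hlamdef, hmudef]
    field_simp
    ring
  -- linear identities between the parameters
  have hrval : r = 2 * τ * σ / (τ + σ) := by
    field_simp
    linarith [hrw]
  have hA : r * x = lam * (τ * x) + mu * (σ * x) := by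
    rw [hlamdef, hmudef, hrval]
    field_simp
    ring
  have hB : r * ((y + y') / 2) + r * x * ((x2 + x2') / 2) / (y2 - y1)
      = lam * (τ * y + τ * x * x2 / (y2 - y1)) + mu * (σ * y' + σ * x * x2' / (y2 - y1)) := by
    rw [hlamdef, hmudef, hrval]
    field_simp
    ring
  have hE : -(p * (r * x) * ((x2 + x2') / 2) * y1 / (y2 - y1))
      = lam * (-(p * (τ * x) * x2 * y1 / (y2 - y1)))
        + mu * (-(p * (σ * x) * x2' * y1 / (y2 - y1))) := by
    rw [hlamdef, hmudef, hrval]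
    field_simp
    ring
  -- the key Hölder step
  have hkey : Real.log (∫ z in T, Real.exp (p * (z.1 * (r * x) +
        z.2 * (r * ((y + y') / 2) + r * x * ((x2 + x2') / 2) / (y2 - y1)))))
      ≤ lam * Real.log (∫ z in T, Real.exp (p * (z.1 * (τ * x) +
          z.2 * (τ * y + τ * x * x2 / (y2 - y1)))))
        + mu * Real.log (∫ z in T, Real.exp (p * (z.1 * (σ * x) +
          z.2 * (σ * y' + σ * x * x2' / (y2 - y1))))) := by
    set B1 : ℝ := τ * y + τ * x * x2 / (y2 - y1) with hB1
    set B2 : ℝ := σ * y' + σ * x * x2' / (y2 - y1) with hB2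
    have hmeas1 : AEMeasurable (fun z : ℝ × ℝ => p * (z.1 * (τ * x) + z.2 * B1))
        (volume.restrict T) := by fun_prop
    have hmeas2 : AEMeasurable (fun z : ℝ × ℝ => p * (z.1 * (σ * x) + z.2 * B2))
        (volume.restrict T) := by fun_prop
    have hstep := TriangleAux.integral_exp_convex (volume.restrict T) hmeas1 hmeas2
      (hInt (τ * x) B1) (hInt (σ * x) B2) hlam hmu hlm
    have heq : (∫ z in T, Real.exp (p * (z.1 * (r * x) +
        z.2 * (r * ((y + y') / 2) + r * x * ((x2 + x2') / 2) / (y2 - y1)))))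
        = ∫ z in T, Real.exp (lam * (p * (z.1 * (τ * x) + z.2 * B1))
            + mu * (p * (z.1 * (σ * x) + z.2 * B2))) := by
      refine setIntegral_congr_fun hTmeas fun z _ => ?_
      congr 1
      rw [hB, hA]
      ring
    rw [heq]
    have hle : (∫ z in T, Real.exp (lam * (p * (z.1 * (τ * x) + z.2 * B1))
            + mu * (p * (z.1 * (σ * x) + z.2 * B2))))
        ≤ (∫ z in T, Real.exp (p * (z.1 * (τ * x) + z.2 * B1))) ^ lam *
          (∫ z in T, Real.exp (p * (z.1 * (σ * x) + z.2 * B2))) ^ mu := hstep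
    have hpos0 : 0 < ∫ z in T, Real.exp (lam * (p * (z.1 * (τ * x) + z.2 * B1))
            + mu * (p * (z.1 * (σ * x) + z.2 * B2))) := by
      rw [← heq]
      exact hIpos _ _
    calc Real.log (∫ z in T, Real.exp (lam * (p * (z.1 * (τ * x) + z.2 * B1))
            + mu * (p * (z.1 * (σ * x) + z.2 * B2))))
        ≤ Real.log ((∫ z in T, Real.exp (p * (z.1 * (τ * x) + z.2 * B1))) ^ lam *
            (∫ z in T, Real.exp (p * (z.1 * (σ * x) + z.2 * B2))) ^ mu) :=
          Real.log_le_log hpos0 hle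
      _ = _ := by
          rw [Real.log_mul (Real.rpow_pos_of_pos (hIpos (τ * x) B1) lam).ne'
              (Real.rpow_pos_of_pos (hIpos (σ * x) B2) mu).ne',
            Real.log_rpow (hIpos (τ * x) B1), Real.log_rpow (hIpos (σ * x) B2)]
  -- put everything together
  have final : ∀ E0 E1 E2 L0 L1 L2 LV : ℝ, E0 = lam * E1 + mu * E2 →
      L0 ≤ lam * L1 + mu * L2 →
      (1 / p) * (E0 + L0 - LV) ≤ lam * ((1 / p) * (E1 + L1 - LV))
        + mu * ((1 / p) * (E2 + L2 - LV)) := by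
    intro E0 E1 E2 L0 L1 L2 LV hE0 hL
    have h1 : E0 + L0 - LV ≤ lam * (E1 + L1 - LV) + mu * (E2 + L2 - LV) := by
      have hexp : lam * (E1 + L1 - LV) + mu * (E2 + L2 - LV)
          = (lam * E1 + mu * E2) + (lam * L1 + mu * L2) - (lam + mu) * LV := by ring
      rw [hexp, hlm]
      linarith
    calc (1 / p) * (E0 + L0 - LV)
        ≤ (1 / p) * (lam * (E1 + L1 - LV) + mu * (E2 + L2 - LV)) :=
          mul_le_mul_of_nonneg_left h1 (by positivity)
      _ = _ := by ring
  rw [show r • ((x : ℝ), (y + y') / 2) = (r * x, r * ((y + y') / 2)) from rfl,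
    show τ • ((x : ℝ), y) = (τ * x, τ * y) from rfl,
    show σ • ((x : ℝ), y') = (σ * x, σ * y') from rfl,
    hsupp, hsupp, hsupp]
  exact final _ _ _ _ _ _ _ hE hkey
end

section
/- Let p ∈ (0,∞) and let K ⊂ ℝ² be a convex body with 0 ∈ int K. Set α := min{x ∈ ℝ : (x,y) ∈ K for some y} and β := max{x ∈ ℝ : (x,y) ∈ K for some y}. Then |(K−(α,0))^{∘,p} ∩ {(x,y): x > 0}| < ∞ and |(K−(β,0))^{∘,p} ∩ {(x,y): x < 0}| < ∞, while |(K−(α,0))^{∘,p} ∩ {(x,y): x < 0}| = ∞ and |(K−(β,0))^{∘,p} ∩ {(x,y): x > 0}| = ∞. -/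
open MeasureTheory Set

open Metric

lemma exp_integrableOn (p : ℝ) {K : Set (ℝ × ℝ)} (hc : IsCompact K) (w : ℝ × ℝ) :
    IntegrableOn (fun x : ℝ × ℝ => Real.exp (p * (x.1 * w.1 + x.2 * w.2))) K := by
  apply ContinuousOn.integrableOn_compact hc
  fun_prop

lemma exp_integral_pos (p : ℝ) {K : Set (ℝ × ℝ)} (hc : IsCompact K)
    (hvol : 0 < volume K) (w : ℝ × ℝ) :
    0 < ∫ x in K, Real.exp (p * (x.1 * w.1 + x.2 * w.2)) := by
  rw [setIntegral_pos_iff_support_of_nonneg_ae]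
  · have : (Function.support fun x : ℝ × ℝ => Real.exp (p * (x.1 * w.1 + x.2 * w.2))) = univ := by
      ext x; simp [Function.mem_support, Real.exp_ne_zero]
    rw [this, univ_inter]; exact hvol
  · exact Filter.Eventually.of_forall fun x => (Real.exp_pos _).le
  · exact exp_integrableOn p hc w

lemma suppFn_le (p : ℝ) (hp : 0 < p) {K : Set (ℝ × ℝ)} (hc : IsCompact K)
    (hvol : 0 < volume K) {w : ℝ × ℝ} {b : ℝ}
    (hb : ∀ x ∈ K, x.1 * w.1 + x.2 * w.2 ≤ b) :
    suppFn p K w ≤ b := by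
  have hvr : 0 < (volume K).toReal :=
    ENNReal.toReal_pos hvol.ne' hc.measure_lt_top.ne
  have hI : (∫ x in K, Real.exp (p * (x.1 * w.1 + x.2 * w.2)))
      ≤ Real.exp (p * b) * (volume K).toReal := by
    calc ∫ x in K, Real.exp (p * (x.1 * w.1 + x.2 * w.2))
        ≤ ∫ _x in K, Real.exp (p * b) := by
          apply setIntegral_mono_on (exp_integrableOn p hc w)
            (integrableOn_const hc.measure_lt_top.ne) hc.measurableSet
          intro x hx
          exact Real.exp_le_exp.2 (mul_le_mul_of_nonneg_left (hb x hx) hp.le)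
      _ = Real.exp (p * b) * (volume K).toReal := by
          rw [setIntegral_const]; ring_nf; rfl
  have hpos := exp_integral_pos p hc hvol w
  have h2 : (∫ x in K, Real.exp (p * (x.1 * w.1 + x.2 * w.2))) / (volume K).toReal
      ≤ Real.exp (p * b) := by
    rw [div_le_iff₀ hvr]; exact hI
  have h3 : Real.log ((∫ x in K, Real.exp (p * (x.1 * w.1 + x.2 * w.2))) / (volume K).toReal)
      ≤ p * b := by
    calc _ ≤ Real.log (Real.exp (p * b)) := by
            apply Real.log_le_log (div_pos hpos hvr) h2
      _ = p * b := Real.log_exp _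
  rw [suppFn]
  calc (1/p) * Real.log ((∫ x in K, Real.exp (p * (x.1 * w.1 + x.2 * w.2))) / (volume K).toReal)
      ≤ (1/p) * (p * b) := by
        apply mul_le_mul_of_nonneg_left h3 (by positivity)
    _ = b := by field_simp

-- lower bound for suppFn via a subset Q on which the linear form is ≥ b
lemma le_suppFn (p : ℝ) (hp : 0 < p) {K Q : Set (ℝ × ℝ)} (hc : IsCompact K)
    (hQK : Q ⊆ K) (hQm : MeasurableSet Q) (hQpos : 0 < volume Q)
    {w : ℝ × ℝ} {b : ℝ} (hb : ∀ x ∈ Q, b ≤ x.1 * w.1 + x.2 * w.2) :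
    Real.log ((volume Q).toReal / (volume K).toReal) / p + b ≤ suppFn p K w := by
  have hKv : volume K < ⊤ := hc.measure_lt_top
  have hQv : volume Q < ⊤ := lt_of_le_of_lt (measure_mono hQK) hKv
  have hvr : 0 < (volume K).toReal :=
    ENNReal.toReal_pos (lt_of_lt_of_le hQpos (measure_mono hQK)).ne' hKv.ne
  have hQr : 0 < (volume Q).toReal := ENNReal.toReal_pos hQpos.ne' hQv.ne
  have h1 : Real.exp (p * b) * (volume Q).toReal
      ≤ ∫ x in K, Real.exp (p * (x.1 * w.1 + x.2 * w.2)) := by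
    calc Real.exp (p * b) * (volume Q).toReal
        ≤ ∫ x in Q, Real.exp (p * (x.1 * w.1 + x.2 * w.2)) := by
          have := setIntegral_ge_of_const_le (μ := volume) hQm hQv.ne
            (f := fun x : ℝ × ℝ => Real.exp (p * (x.1 * w.1 + x.2 * w.2)))
            (c := Real.exp (p * b))
            (fun x hx => Real.exp_le_exp.2 (mul_le_mul_of_nonneg_left (hb x hx) hp.le))
            ((exp_integrableOn p hc w).mono_set hQK)
          simp only [smul_eq_mul, Measure.real] at this
          linarith [this]
      _ ≤ ∫ x in K, Real.exp (p * (x.1 * w.1 + x.2 * w.2)) := by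
          apply setIntegral_mono_set (exp_integrableOn p hc w)
            (Filter.Eventually.of_forall fun x => (Real.exp_pos _).le)
            (HasSubset.Subset.eventuallyLE hQK)
  have h2 : Real.exp (p * b) * ((volume Q).toReal / (volume K).toReal)
      ≤ (∫ x in K, Real.exp (p * (x.1 * w.1 + x.2 * w.2))) / (volume K).toReal := by
    rw [mul_div_assoc']
    gcongr
  have hlpos : 0 < Real.exp (p * b) * ((volume Q).toReal / (volume K).toReal) := by positivity
  have h3 := Real.log_le_log hlpos h2
  rw [Real.log_mul (Real.exp_pos _).ne' (by positivity), Real.log_exp] at h3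
  rw [suppFn]
  have := mul_le_mul_of_nonneg_left h3 (le_of_lt (one_div_pos.2 hp))
  calc Real.log ((volume Q).toReal / (volume K).toReal) / p + b
      = (1/p) * (p * b + Real.log ((volume Q).toReal / (volume K).toReal)) := by field_simp; ring
    _ ≤ _ := this

lemma rexp_integrableOn {a : ℝ} (ha : 0 < a) :
    IntegrableOn (fun r : ℝ => r * Real.exp (-(a * r))) (Ioi 0) := by
  have h := integrableOn_rpow_mul_exp_neg_mul_rpow (s := 1) (p := 1) (b := a)
    (by norm_num) one_pos ha
  apply h.congr_fun _ measurableSet_Ioi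
  intro x hx
  simp [Real.rpow_one, neg_mul]

lemma rexp_integral {a : ℝ} (ha : 0 < a) :
    ∫ r in Ioi (0:ℝ), r * Real.exp (-(a * r)) = 1 / a ^ 2 := by
  have := Real.integral_rpow_mul_exp_neg_mul_Ioi (a := 2) (r := a) (by norm_num) ha
  rw [show (2:ℝ) - 1 = 1 by norm_num] at this
  simp only [Real.rpow_one] at this
  rw [this, show (2:ℝ) = 1 + 1 by norm_num,
    Real.Gamma_add_one (by norm_num : (1:ℝ) ≠ 0), Real.Gamma_one]
  rw [show ((1:ℝ)+1) = ((2:ℕ):ℝ) by norm_num, Real.rpow_natCast]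
  rw [div_pow, one_pow, mul_one, mul_one]

lemma nearNorm_le_one (p : ℝ) (hp : 0 < p) {K : Set (ℝ × ℝ)} (hc : IsCompact K)
    (hvol : 0 < volume K) {y : ℝ × ℝ}
    (hub : ∀ x ∈ K, x.1 * y.1 + x.2 * y.2 ≤ 1) : nearNorm p K y ≤ 1 := by
  rcases eq_or_ne y 0 with rfl | hy
  · rw [nearNorm]; simp
  rw [nearNorm, if_neg hy]
  set g : ℝ → ℝ := fun r => r * Real.exp (-(suppFn p K (r • y))) with hgdef
  have key : ∀ r ∈ Ioi (0:ℝ), r * Real.exp (-(1 * r)) ≤ g r := by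
    intro r hr
    have hr0 : (0:ℝ) < r := hr
    have hs : suppFn p K (r • y) ≤ r := by
      apply suppFn_le p hp hc hvol
      intro x hx
      have h1 : (r • y).1 = r * y.1 := rfl
      have h2 : (r • y).2 = r * y.2 := rfl
      rw [h1, h2]
      calc x.1 * (r * y.1) + x.2 * (r * y.2) = r * (x.1 * y.1 + x.2 * y.2) := by ring
        _ ≤ r * 1 := mul_le_mul_of_nonneg_left (hub x hx) hr0.le
        _ = r := mul_one r
    have : Real.exp (-(1 * r)) ≤ Real.exp (-(suppFn p K (r • y))) := by
      apply Real.exp_le_exp.2; rw [one_mul]; linarith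
    exact mul_le_mul_of_nonneg_left this hr0.le
  have gnn : 0 ≤ᵐ[volume.restrict (Ioi (0:ℝ))] g := by
    refine (ae_restrict_iff' measurableSet_Ioi).2 (Filter.Eventually.of_forall fun r hr => ?_)
    have : (0:ℝ) < r := hr
    positivity
  have base : (∫⁻ r in Ioi (0:ℝ), ENNReal.ofReal (r * Real.exp (-(1 * r)))) = 1 := by
    rw [← ofReal_integral_eq_lintegral_ofReal (rexp_integrableOn one_pos)]
    · rw [rexp_integral one_pos]; norm_num
    · refine (ae_restrict_iff' measurableSet_Ioi).2 (Filter.Eventually.of_forall fun r hr => ?_)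
      have : (0:ℝ) < r := hr
      positivity
  have hmono : (1:ENNReal) ≤ ∫⁻ r in Ioi (0:ℝ), ENNReal.ofReal (g r) := by
    rw [← base]
    exact setLIntegral_mono' measurableSet_Ioi fun r hr => ENNReal.ofReal_le_ofReal (key r hr)
  by_cases hgi : IntegrableOn g (Ioi 0) volume
  · have hof : ENNReal.ofReal (∫ r in Ioi (0:ℝ), g r)
        = ∫⁻ r in Ioi (0:ℝ), ENNReal.ofReal (g r) :=
      ofReal_integral_eq_lintegral_ofReal hgi gnn
    have h1 : (1:ℝ) ≤ ∫ r in Ioi (0:ℝ), g r := by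
      have := hmono
      rw [← hof] at this
      exact (ENNReal.one_le_ofReal).1 this
    exact Real.rpow_le_one_of_one_le_of_nonpos h1 (by norm_num)
  · rw [integral_undef hgi, Real.zero_rpow (by norm_num)]
    norm_num

lemma continuous_suppFn_smul (p : ℝ) (hp : 0 < p) {K : Set (ℝ × ℝ)} (hc : IsCompact K)
    (hvol : 0 < volume K) (y : ℝ × ℝ) :
    Continuous fun r : ℝ => suppFn p K (r • y) := by
  have hvr : 0 < (volume K).toReal := ENNReal.toReal_pos hvol.ne' hc.measure_lt_top.ne
  obtain ⟨M, hM0, hM⟩ : ∃ M : ℝ, 0 ≤ M ∧ ∀ x ∈ K, |x.1 * y.1 + x.2 * y.2| ≤ M := by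
    obtain ⟨R, hR⟩ := hc.isBounded.subset_closedBall 0
    refine ⟨|R| * (|y.1| + |y.2|), by positivity, fun x hx => ?_⟩
    have hx1 : |x.1| ≤ |R| := by
      have := hR hx
      simp only [mem_closedBall, dist_zero_right, Prod.norm_def] at this
      calc |x.1| = ‖x.1‖ := rfl
        _ ≤ max ‖x.1‖ ‖x.2‖ := le_max_left _ _
        _ ≤ R := this
        _ ≤ |R| := le_abs_self R
    have hx2 : |x.2| ≤ |R| := by
      have := hR hx
      simp only [mem_closedBall, dist_zero_right, Prod.norm_def] at this
      calc |x.2| = ‖x.2‖ := rfl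
        _ ≤ max ‖x.1‖ ‖x.2‖ := le_max_right _ _
        _ ≤ R := this
        _ ≤ |R| := le_abs_self R
    calc |x.1 * y.1 + x.2 * y.2| ≤ |x.1| * |y.1| + |x.2| * |y.2| := by
          refine (abs_add_le _ _).trans ?_
          rw [abs_mul, abs_mul]
      _ ≤ |R| * (|y.1| + |y.2|) := by
          nlinarith [abs_nonneg y.1, abs_nonneg y.2, abs_nonneg x.1, abs_nonneg x.2,
            abs_nonneg R]
  have hFcont : Continuous fun r : ℝ =>
      ∫ x in K, Real.exp (p * (x.1 * (r • y).1 + x.2 * (r • y).2)) := by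
    rw [continuous_iff_continuousAt]
    intro r0
    apply continuousAt_of_dominated (bound := fun _ => Real.exp (p * ((|r0| + 1) * M)))
    · exact Filter.Eventually.of_forall fun r =>
        (Continuous.aestronglyMeasurable (by fun_prop))
    · refine Filter.eventually_of_mem (Metric.ball_mem_nhds r0 one_pos) fun r hr => ?_
      refine (ae_restrict_iff' hc.measurableSet).2 (Filter.Eventually.of_forall fun x hx => ?_)
      have hrabs : |r| ≤ |r0| + 1 := by
        have := mem_ball_iff_norm.1 hr
        have h2 : |r - r0| < 1 := this
        calc |r| = |r0 + (r - r0)| := by ring_nf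
          _ ≤ |r0| + |r - r0| := abs_add_le _ _
          _ ≤ |r0| + 1 := by linarith
      have h1 : (r • y).1 = r * y.1 := rfl
      have h2 : (r • y).2 = r * y.2 := rfl
      rw [Real.norm_eq_abs, Real.abs_exp, Real.exp_le_exp, h1, h2]
      have : x.1 * (r * y.1) + x.2 * (r * y.2) = r * (x.1 * y.1 + x.2 * y.2) := by ring
      rw [this]
      calc p * (r * (x.1 * y.1 + x.2 * y.2)) ≤ p * |r * (x.1 * y.1 + x.2 * y.2)| := by
            have := le_abs_self (r * (x.1 * y.1 + x.2 * y.2))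
            exact mul_le_mul_of_nonneg_left this hp.le
        _ ≤ p * ((|r0| + 1) * M) := by
            apply mul_le_mul_of_nonneg_left _ hp.le
            rw [abs_mul]
            apply mul_le_mul hrabs (hM x hx) (abs_nonneg _) (by positivity)
    · exact integrableOn_const hc.measure_lt_top.ne
    · exact Filter.Eventually.of_forall fun x => (Continuous.continuousAt (by fun_prop))
  have hFpos : ∀ r : ℝ, 0 < ∫ x in K, Real.exp (p * (x.1 * (r • y).1 + x.2 * (r • y).2)) :=
    fun r => exp_integral_pos p hc hvol (r • y)
  have : (fun r : ℝ => suppFn p K (r • y)) = fun r : ℝ =>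
      (1 / p) * Real.log ((∫ x in K, Real.exp (p * (x.1 * (r • y).1 + x.2 * (r • y).2)))
        / (volume K).toReal) := rfl
  rw [this]
  exact continuous_const.mul ((hFcont.div_const _).log fun r => (div_pos (hFpos r) hvr).ne')

lemma one_lt_nearNorm (p : ℝ) (hp : 0 < p) {K : Set (ℝ × ℝ)} (hc : IsCompact K)
    (hvol : 0 < volume K) {y : ℝ × ℝ} (hy : y ≠ 0) {a C : ℝ} (ha : 0 < a)
    (hbound : ∀ r : ℝ, 0 < r → Real.exp (-(suppFn p K (r • y))) ≤ C * Real.exp (-(a * r)))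
    (hsmall : C < a ^ 2) : 1 < nearNorm p K y := by
  set g : ℝ → ℝ := fun r => r * Real.exp (-(suppFn p K (r • y))) with hgdef
  have hgcont : Continuous g :=
    continuous_id.mul ((continuous_suppFn_smul p hp hc hvol y).neg.rexp)
  set G : ℝ → ℝ := fun r => C * (r * Real.exp (-(a * r))) with hGdef
  have hGint : IntegrableOn G (Ioi 0) := (rexp_integrableOn ha).const_mul C
  have hbd : ∀ r ∈ Ioi (0:ℝ), g r ≤ G r := by
    intro r hr
    have hr0 : (0:ℝ) < r := hr
    have := hbound r hr0
    calc g r = r * Real.exp (-(suppFn p K (r • y))) := rfl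
      _ ≤ r * (C * Real.exp (-(a * r))) := mul_le_mul_of_nonneg_left this hr0.le
      _ = G r := by rw [hGdef]; ring
  have hgi : IntegrableOn g (Ioi 0) := by
    apply Integrable.mono' hGint (hgcont.aestronglyMeasurable.restrict)
    refine (ae_restrict_iff' measurableSet_Ioi).2 (Filter.Eventually.of_forall fun r hr => ?_)
    have hr0 : (0:ℝ) < r := hr
    rw [Real.norm_eq_abs, abs_of_nonneg (by positivity)]
    exact hbd r hr
  have hpos : 0 < ∫ r in Ioi (0:ℝ), g r := by
    rw [setIntegral_pos_iff_support_of_nonneg_ae _ hgi]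
    · have : Function.support g ∩ Ioi 0 = Ioi 0 := by
        apply inter_eq_right.2
        intro r hr
        have hr0 : (0:ℝ) < r := hr
        exact (by positivity : g r ≠ 0)
      rw [this, Real.volume_Ioi]
      exact ENNReal.zero_lt_top
    · refine (ae_restrict_iff' measurableSet_Ioi).2 (Filter.Eventually.of_forall fun r hr => ?_)
      have hr0 : (0:ℝ) < r := hr
      positivity
  have hlt : ∫ r in Ioi (0:ℝ), g r < 1 := by
    have h1 : ∫ r in Ioi (0:ℝ), g r ≤ ∫ r in Ioi (0:ℝ), G r :=
      setIntegral_mono_on hgi hGint measurableSet_Ioi hbd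
    have h2 : ∫ r in Ioi (0:ℝ), G r = C / a ^ 2 := by
      rw [hGdef, MeasureTheory.integral_const_mul, rexp_integral ha]; ring
    rw [h2] at h1
    calc ∫ r in Ioi (0:ℝ), g r ≤ C / a ^ 2 := h1
      _ < 1 := by rw [div_lt_one (by positivity)]; exact hsmall
  rw [nearNorm, if_neg hy]
  exact (Real.one_lt_rpow_iff_of_pos hpos).2 (Or.inr ⟨hlt, by norm_num⟩)

lemma norm_eq_max (y : ℝ × ℝ) : ‖y‖ = max |y.1| |y.2| := by
  simp [Prod.norm_def, Real.norm_eq_abs]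

lemma fin_half (p : ℝ) (hp : 0 < p) {K' : Set (ℝ × ℝ)} (hc : IsCompact K')
    (hvol : 0 < volume K') {ε : ℝ} (hε : 0 < ε) {z : ℝ × ℝ}
    (hball : Metric.ball z ε ⊆ K') :
    ∃ R0 : ℝ, 0 < R0 ∧ ∀ y : ℝ × ℝ, y ≠ 0 → 0 ≤ z.1 * y.1 + z.2 * y.2 →
      R0 < max |y.1| |y.2| → 1 < nearNorm p K' y := by
  have hvr : 0 < (volume K').toReal := ENNReal.toReal_pos hvol.ne' hc.measure_lt_top.ne
  set m : ℝ := (volume (Metric.ball (0:ℝ×ℝ) (ε/8))).toReal with hm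
  have hmpos : 0 < m :=
    ENNReal.toReal_pos (measure_ball_pos volume _ (by positivity)).ne' measure_ball_lt_top.ne
  set c0 : ℝ := Real.log (m / (volume K').toReal) / p with hc0
  set C : ℝ := Real.exp (-c0) with hC
  refine ⟨max 1 ((4/ε) * (Real.sqrt C + 1)), lt_of_lt_of_le one_pos (le_max_left _ _), ?_⟩
  intro y hy hzy hbig
  set s : ℝ := max |y.1| |y.2| with hs
  have hs1 : 1 < s := lt_of_le_of_lt (le_max_left 1 _) hbig
  have hspos : 0 < s := lt_trans one_pos hs1
  have hy1s : |y.1| ≤ s := le_max_left _ _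
  have hy2s : |y.2| ≤ s := le_max_right _ _
  obtain ⟨v, hv1, hv2, hvy⟩ : ∃ v : ℝ × ℝ, |v.1| ≤ 1 ∧ |v.2| ≤ 1 ∧ v.1 * y.1 + v.2 * y.2 = s := by
    rcases le_total |y.2| |y.1| with h | h
    · refine ⟨((if 0 ≤ y.1 then 1 else -1 : ℝ), 0), ?_, by norm_num, ?_⟩
      · split <;> norm_num
      · simp only
        rw [hs, max_eq_left h]
        split
        · rw [abs_of_nonneg ‹_›]; ring
        · rw [abs_of_neg (by linarith [not_le.1 ‹¬ 0 ≤ y.1›])]; ring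
    · refine ⟨((0:ℝ), (if 0 ≤ y.2 then 1 else -1 : ℝ)), by norm_num, ?_, ?_⟩
      · split <;> norm_num
      · simp only
        rw [hs, max_eq_right h]
        split
        · rw [abs_of_nonneg ‹_›]; ring
        · rw [abs_of_neg (by linarith [not_le.1 ‹¬ 0 ≤ y.2›])]; ring
  set w : ℝ × ℝ := z + (ε/2) • v with hw
  set Q : Set (ℝ × ℝ) := Metric.ball w (ε/8) with hQ
  have hQK : Q ⊆ K' := by
    intro q hq
    apply hball
    have h1 : dist q w < ε/8 := hq
    have h2 : dist w z ≤ ε/2 := by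
      rw [dist_eq_norm, hw, add_sub_cancel_left, norm_smul, Real.norm_eq_abs,
        abs_of_nonneg (by positivity : (0:ℝ) ≤ ε/2), norm_eq_max]
      have : max |v.1| |v.2| ≤ 1 := max_le hv1 hv2
      nlinarith
    have := dist_triangle q w z
    exact mem_ball.2 (by rw [mem_ball] at *; linarith)
  have hQvolm : (volume Q).toReal = m := by rw [hQ, Measure.addHaar_ball_center]
  have hQpos : 0 < volume Q := measure_ball_pos volume _ (by positivity)
  have hwy : w.1 * y.1 + w.2 * y.2 = (z.1 * y.1 + z.2 * y.2) + (ε/2) * s := by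
    have e1 : w.1 = z.1 + (ε/2) * v.1 := rfl
    have e2 : w.2 = z.2 + (ε/2) * v.2 := rfl
    rw [e1, e2, ← hvy]; ring
  have hlow : ∀ x ∈ Q, (ε/4) * s ≤ x.1 * y.1 + x.2 * y.2 := by
    intro x hx
    have hd : dist x w < ε/8 := hx
    rw [Prod.dist_eq] at hd
    have hu1 : |x.1 - w.1| ≤ ε/8 := by
      have : dist x.1 w.1 ≤ ε/8 := le_of_lt (lt_of_le_of_lt (le_max_left _ _) hd)
      rwa [Real.dist_eq] at this
    have hu2 : |x.2 - w.2| ≤ ε/8 := by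
      have : dist x.2 w.2 ≤ ε/8 := le_of_lt (lt_of_le_of_lt (le_max_right _ _) hd)
      rwa [Real.dist_eq] at this
    have b1 : (x.1 - w.1) * y.1 ≥ -((ε/8) * s) := by
      have : |(x.1 - w.1) * y.1| ≤ (ε/8) * s := by
        rw [abs_mul]
        exact mul_le_mul hu1 hy1s (abs_nonneg _) (by positivity)
      linarith [neg_abs_le ((x.1 - w.1) * y.1)]
    have b2 : (x.2 - w.2) * y.2 ≥ -((ε/8) * s) := by
      have : |(x.2 - w.2) * y.2| ≤ (ε/8) * s := by
        rw [abs_mul]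
        exact mul_le_mul hu2 hy2s (abs_nonneg _) (by positivity)
      linarith [neg_abs_le ((x.2 - w.2) * y.2)]
    have expand : x.1 * y.1 + x.2 * y.2
        = (w.1 * y.1 + w.2 * y.2) + ((x.1 - w.1) * y.1 + (x.2 - w.2) * y.2) := by ring
    rw [expand, hwy]
    nlinarith
  have key : ∀ r : ℝ, 0 < r →
      Real.exp (-(suppFn p K' (r • y))) ≤ C * Real.exp (-((ε/4) * s * r)) := by
    intro r hr
    have hb : ∀ x ∈ Q, r * ((ε/4) * s) ≤ x.1 * (r • y).1 + x.2 * (r • y).2 := by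
      intro x hx
      have e1 : (r • y).1 = r * y.1 := rfl
      have e2 : (r • y).2 = r * y.2 := rfl
      rw [e1, e2]
      calc r * ((ε/4) * s) ≤ r * (x.1 * y.1 + x.2 * y.2) :=
            mul_le_mul_of_nonneg_left (hlow x hx) hr.le
        _ = x.1 * (r * y.1) + x.2 * (r * y.2) := by ring
    have hsupp := le_suppFn p hp hc hQK measurableSet_ball hQpos hb
    rw [hQvolm] at hsupp
    have h1 : c0 + (ε/4) * s * r ≤ suppFn p K' (r • y) := by
      rw [hc0]; linarith [hsupp]
    calc Real.exp (-(suppFn p K' (r • y))) ≤ Real.exp (-(c0 + (ε/4) * s * r)) :=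
          Real.exp_le_exp.2 (by linarith)
      _ = C * Real.exp (-((ε/4) * s * r)) := by
          rw [hC, ← Real.exp_add]; ring_nf
  have hsmall : C < ((ε/4) * s) ^ 2 := by
    have h1 : (4/ε) * (Real.sqrt C + 1) < s := lt_of_le_of_lt (le_max_right 1 _) hbig
    have h2 : Real.sqrt C + 1 ≤ (ε/4) * s := by
      have hmul := mul_le_mul_of_nonneg_left h1.le (by positivity : (0:ℝ) ≤ ε/4)
      have he : (ε/4) * ((4/ε) * (Real.sqrt C + 1))
          = ((ε/4) * (4/ε)) * (Real.sqrt C + 1) := by ring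
      have he2 : (ε/4) * (4/ε) = 1 := by field_simp
      rw [he, he2, one_mul] at hmul
      exact hmul
    have h3 : (0:ℝ) ≤ Real.sqrt C := Real.sqrt_nonneg _
    have h4 : Real.sqrt C ^ 2 = C := Real.sq_sqrt (le_of_lt (Real.exp_pos _))
    calc C = Real.sqrt C ^ 2 := h4.symm
      _ < (Real.sqrt C + 1) ^ 2 := by nlinarith
      _ ≤ ((ε/4) * s) ^ 2 := pow_le_pow_left₀ (by positivity) h2 2
  exact one_lt_nearNorm p hp hc hvol hy (by positivity) key hsmall

lemma strip_nearNorm_le (p : ℝ) (hp : 0 < p) {K' : Set (ℝ × ℝ)} (hc : IsCompact K')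
    (hvol : 0 < volume K') {R : ℝ} (hR : 0 < R) (hx2 : ∀ x ∈ K', |x.2| ≤ R)
    {y : ℝ × ℝ} (hy1 : ∀ x ∈ K', x.1 * y.1 ≤ 0) (hy2 : |y.2| < 1/R) :
    nearNorm p K' y ≤ 1 := by
  apply nearNorm_le_one p hp hc hvol
  intro x hx
  have h2 : x.2 * y.2 ≤ 1 := by
    calc x.2 * y.2 ≤ |x.2 * y.2| := le_abs_self _
      _ = |x.2| * |y.2| := abs_mul _ _
      _ ≤ R * (1/R) := mul_le_mul (hx2 x hx) hy2.le (abs_nonneg _) hR.le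
      _ = 1 := by field_simp
  linarith [hy1 x hx]

/-- Lemma 5.10: translating a planar convex body so that the origin sits
on its leftmost (resp. rightmost) vertical tangent line makes the right (resp. left) part of
the `L^p`-polar have finite area, and the other part infinite area. -/
theorem lpPolar_halfspace_finiteness (p : ℝ) (hp : 0 < p)
    (K : Set (ℝ × ℝ)) (hKcomp : IsCompact K) (hKconv : Convex ℝ K)
    (hKint : (interior K).Nonempty) (h0 : (0 : ℝ × ℝ) ∈ interior K)
    (α β : ℝ)
    (hα : IsLeast {x : ℝ | ∃ y : ℝ, ((x : ℝ), y) ∈ K} α)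
    (hβ : IsGreatest {x : ℝ | ∃ y : ℝ, ((x : ℝ), y) ∈ K} β) :
    volume (lpPolar p ((fun q => q - ((α : ℝ), (0 : ℝ))) '' K) ∩ {q : ℝ × ℝ | 0 < q.1}) < ⊤ ∧
    volume (lpPolar p ((fun q => q - ((β : ℝ), (0 : ℝ))) '' K) ∩ {q : ℝ × ℝ | q.1 < 0}) < ⊤ ∧
    volume (lpPolar p ((fun q => q - ((α : ℝ), (0 : ℝ))) '' K) ∩ {q : ℝ × ℝ | q.1 < 0}) = ⊤ ∧
    volume (lpPolar p ((fun q => q - ((β : ℝ), (0 : ℝ))) '' K) ∩ {q : ℝ × ℝ | 0 < q.1}) = ⊤ := by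
  -- basic facts
  have hK00 : ((0:ℝ), (0:ℝ)) ∈ K := interior_subset h0
  have hα0 : α ≤ 0 := hα.2 ⟨0, hK00⟩
  have hβ0 : 0 ≤ β := hβ.2 ⟨0, hK00⟩
  have hvolK : 0 < volume K := Measure.measure_pos_of_nonempty_interior volume hKint
  -- membership in translates
  have himg : ∀ (c : ℝ) (q : ℝ × ℝ),
      q ∈ (fun q : ℝ × ℝ => q - ((c:ℝ), (0:ℝ))) '' K ↔ q + ((c:ℝ), (0:ℝ)) ∈ K := by
    intro c q
    constructor
    · rintro ⟨k, hk, rfl⟩; simpa using hk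
    · intro h; exact ⟨q + ((c:ℝ), (0:ℝ)), h, add_sub_cancel_right _ _⟩
  have hvolimg : ∀ c : ℝ, volume ((fun q : ℝ × ℝ => q - ((c:ℝ), (0:ℝ))) '' K) = volume K := by
    intro c
    have he : (fun q : ℝ × ℝ => q - ((c:ℝ), (0:ℝ))) '' K
        = (fun q : ℝ × ℝ => q + ((c:ℝ), (0:ℝ))) ⁻¹' K := by
      ext q; rw [mem_preimage]; exact himg c q
    rw [he]
    exact measure_preimage_add_right volume _ K
  have hcomp : ∀ c : ℝ, IsCompact ((fun q : ℝ × ℝ => q - ((c:ℝ), (0:ℝ))) '' K) :=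
    fun c => hKcomp.image (continuous_id.sub continuous_const)
  have hvolc : ∀ c : ℝ, 0 < volume ((fun q : ℝ × ℝ => q - ((c:ℝ), (0:ℝ))) '' K) := by
    intro c; rw [hvolimg c]; exact hvolK
  -- bound R on K
  obtain ⟨R, hRK⟩ := hKcomp.isBounded.subset_closedBall 0
  set RR : ℝ := |R| + 1 with hRRdef
  have hRR : 0 < RR := by positivity
  have hx2 : ∀ c : ℝ, ∀ x ∈ (fun q : ℝ × ℝ => q - ((c:ℝ), (0:ℝ))) '' K, |x.2| ≤ RR := by
    rintro c x hx
    obtain ⟨k, hk, rfl⟩ := hx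
    have := hRK hk
    simp only [mem_closedBall, dist_zero_right, Prod.norm_def] at this
    have h2 : |k.2| ≤ R := le_trans (le_max_right ‖k.1‖ ‖k.2‖) this
    have : (k - ((c:ℝ), (0:ℝ))).2 = k.2 := by simp
    rw [this]
    calc |k.2| ≤ R := h2
      _ ≤ |R| := le_abs_self R
      _ ≤ RR := by rw [hRRdef]; linarith
  -- ε ball at origin
  obtain ⟨ε, hε, hballK⟩ : ∃ ε > 0, Metric.ball (0 : ℝ × ℝ) ε ⊆ K := by
    obtain ⟨ε, hε, h⟩ := Metric.mem_nhds_iff.1 (mem_interior_iff_mem_nhds.1 h0)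
    exact ⟨ε, hε, h⟩
  have hballc : ∀ c : ℝ,
      Metric.ball ((-c, 0) : ℝ × ℝ) ε ⊆ (fun q : ℝ × ℝ => q - ((c:ℝ), (0:ℝ))) '' K := by
    intro c q hq
    rw [himg]
    apply hballK
    rw [mem_ball, dist_eq_norm] at hq ⊢
    have : q + ((c:ℝ), (0:ℝ)) - 0 = q - ((-c:ℝ), (0:ℝ)) := by
      apply Prod.ext <;> simp
    rw [this]
    exact hq
  -- x.1 sign conditions
  have hx1α : ∀ x ∈ (fun q : ℝ × ℝ => q - ((α:ℝ), (0:ℝ))) '' K, 0 ≤ x.1 := by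
    rintro x ⟨k, hk, rfl⟩
    have : α ≤ k.1 := hα.2 ⟨k.2, by rwa [Prod.mk.eta]⟩
    have e : (k - ((α:ℝ), (0:ℝ))).1 = k.1 - α := rfl
    rw [e]; linarith
  have hx1β : ∀ x ∈ (fun q : ℝ × ℝ => q - ((β:ℝ), (0:ℝ))) '' K, x.1 ≤ 0 := by
    rintro x ⟨k, hk, rfl⟩
    have : k.1 ≤ β := hβ.2 ⟨k.2, by rwa [Prod.mk.eta]⟩
    have e : (k - ((β:ℝ), (0:ℝ))).1 = k.1 - β := rfl
    rw [e]; linarith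
  -- FINITE PARTS
  have finα : volume (lpPolar p ((fun q => q - ((α : ℝ), (0 : ℝ))) '' K)
      ∩ {q : ℝ × ℝ | 0 < q.1}) < ⊤ := by
    obtain ⟨R0, hR0pos, hR0⟩ := fin_half p hp (hcomp α) (hvolc α) hε (hballc α)
    have hsub : lpPolar p ((fun q => q - ((α : ℝ), (0 : ℝ))) '' K) ∩ {q : ℝ × ℝ | 0 < q.1}
        ⊆ Metric.closedBall (0 : ℝ × ℝ) R0 := by
      rintro y ⟨hy1, hy2⟩
      have hy2' : 0 < y.1 := hy2
      simp only [Metric.mem_closedBall, dist_zero_right]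
      rw [norm_eq_max]
      by_contra hcon
      push_neg at hcon
      have hy0 : y ≠ 0 := by
        intro h; rw [h] at hy2'; exact lt_irrefl _ hy2'
      have hzy : 0 ≤ ((-α : ℝ), (0:ℝ)).1 * y.1 + ((-α : ℝ), (0:ℝ)).2 * y.2 := by
        simp only
        have : 0 ≤ -α := by linarith
        nlinarith
      have := hR0 y hy0 hzy hcon
      have hmem : nearNorm p ((fun q => q - ((α : ℝ), (0 : ℝ))) '' K) y ≤ 1 := hy1
      linarith
    exact lt_of_le_of_lt (measure_mono hsub) measure_closedBall_lt_top
  have finβ : volume (lpPolar p ((fun q => q - ((β : ℝ), (0 : ℝ))) '' K)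
      ∩ {q : ℝ × ℝ | q.1 < 0}) < ⊤ := by
    obtain ⟨R0, hR0pos, hR0⟩ := fin_half p hp (hcomp β) (hvolc β) hε (hballc β)
    have hsub : lpPolar p ((fun q => q - ((β : ℝ), (0 : ℝ))) '' K) ∩ {q : ℝ × ℝ | q.1 < 0}
        ⊆ Metric.closedBall (0 : ℝ × ℝ) R0 := by
      rintro y ⟨hy1, hy2⟩
      have hy2' : y.1 < 0 := hy2
      simp only [Metric.mem_closedBall, dist_zero_right]
      rw [norm_eq_max]
      by_contra hcon
      push_neg at hcon
      have hy0 : y ≠ 0 := by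
        intro h; rw [h] at hy2'; exact lt_irrefl _ hy2'
      have hzy : 0 ≤ ((-β : ℝ), (0:ℝ)).1 * y.1 + ((-β : ℝ), (0:ℝ)).2 * y.2 := by
        simp only
        nlinarith
      have := hR0 y hy0 hzy hcon
      have hmem : nearNorm p ((fun q => q - ((β : ℝ), (0 : ℝ))) '' K) y ≤ 1 := hy1
      linarith
    exact lt_of_le_of_lt (measure_mono hsub) measure_closedBall_lt_top
  -- INFINITE PARTS
  have infα : volume (lpPolar p ((fun q => q - ((α : ℝ), (0 : ℝ))) '' K)
      ∩ {q : ℝ × ℝ | q.1 < 0}) = ⊤ := by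
    have hsub : (Iio (0:ℝ)) ×ˢ (Ioo (-(1/RR)) (1/RR))
        ⊆ lpPolar p ((fun q => q - ((α : ℝ), (0 : ℝ))) '' K) ∩ {q : ℝ × ℝ | q.1 < 0} := by
      rintro y ⟨hy1, hy2⟩
      have hy1' : y.1 < 0 := hy1
      refine ⟨?_, hy1'⟩
      show nearNorm p ((fun q => q - ((α : ℝ), (0 : ℝ))) '' K) y ≤ 1
      apply strip_nearNorm_le p hp (hcomp α) (hvolc α) hRR (hx2 α)
      · intro x hx
        exact mul_nonpos_iff.2 (Or.inl ⟨hx1α x hx, hy1'.le⟩)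
      · rw [abs_lt]; exact ⟨hy2.1, hy2.2⟩
    have hvolS : volume ((Iio (0:ℝ)) ×ˢ (Ioo (-(1/RR)) (1/RR))) = ⊤ := by
      rw [Measure.volume_eq_prod, Measure.prod_prod, Real.volume_Iio, Real.volume_Ioo]
      rw [ENNReal.top_mul]
      have h1R : (0:ℝ) < 1/RR := by positivity
      exact (ENNReal.ofReal_pos.2 (by linarith : (0:ℝ) < 1/RR - -(1/RR))).ne'
    exact eq_top_iff.2 (le_trans hvolS.ge (measure_mono hsub))
  have infβ : volume (lpPolar p ((fun q => q - ((β : ℝ), (0 : ℝ))) '' K)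
      ∩ {q : ℝ × ℝ | 0 < q.1}) = ⊤ := by
    have hsub : (Ioi (0:ℝ)) ×ˢ (Ioo (-(1/RR)) (1/RR))
        ⊆ lpPolar p ((fun q => q - ((β : ℝ), (0 : ℝ))) '' K) ∩ {q : ℝ × ℝ | 0 < q.1} := by
      rintro y ⟨hy1, hy2⟩
      have hy1' : 0 < y.1 := hy1
      refine ⟨?_, hy1'⟩
      show nearNorm p ((fun q => q - ((β : ℝ), (0 : ℝ))) '' K) y ≤ 1
      apply strip_nearNorm_le p hp (hcomp β) (hvolc β) hRR (hx2 β)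
      · intro x hx
        exact mul_nonpos_iff.2 (Or.inr ⟨hx1β x hx, hy1'.le⟩)
      · rw [abs_lt]; exact ⟨hy2.1, hy2.2⟩
    have hvolS : volume ((Ioi (0:ℝ)) ×ˢ (Ioo (-(1/RR)) (1/RR))) = ⊤ := by
      rw [Measure.volume_eq_prod, Measure.prod_prod, Real.volume_Ioi, Real.volume_Ioo]
      rw [ENNReal.top_mul]
      have h1R : (0:ℝ) < 1/RR := by positivity
      exact (ENNReal.ofReal_pos.2 (by linarith : (0:ℝ) < 1/RR - -(1/RR))).ne'
    exact eq_top_iff.2 (le_trans hvolS.ge (measure_mono hsub))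
  exact ⟨finα, finβ, infα, infβ⟩
end

section
/- Let (P̂, Δ(·), P(·), I) be a Mahler sliding family in ℝ². Then t ↦ 1/C(P(t)) is a convex quadratic polynomial on I: there exist real numbers a ≥ 0, b, c such that 1/C(P(t)) = a·t² + b·t + c for every t ∈ I. -/
open MeasureTheory Set

/-- Coordinates of a point of `ℝ²`. -/
noncomputable def coord2 (i : Fin 2) (q : ℝ × ℝ) : ℝ := if i = 0 then q.1 else q.2

/-- The barycenter coordinates of `A ⊆ ℝ²`. -/
noncomputable def bary2 (A : Set (ℝ × ℝ)) (i : Fin 2) : ℝ :=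
  (∫ q in A, coord2 i q) / (volume A).toReal

/-- The covariance matrix of `A ⊆ ℝ²`. -/
noncomputable def cov2 (A : Set (ℝ × ℝ)) : Matrix (Fin 2) (Fin 2) ℝ :=
  Matrix.of fun i j =>
    (∫ q in A, coord2 i q * coord2 j q) / (volume A).toReal - bary2 A i * bary2 A j

/-- The affine invariant `C(A) = |A|² / det Cov(A)`, the inverse `2n`-th power of the
isotropic constant. -/
noncomputable def isoC (A : Set (ℝ × ℝ)) : ℝ := (volume A).toReal ^ 2 / (cov2 A).det

/-- The shear map `(x,y) ↦ (x + c(y−d), y)` as a homeomorphism of `ℝ²`. -/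
noncomputable def shearHomeo (c d : ℝ) : (ℝ × ℝ) ≃ₜ (ℝ × ℝ) where
  toFun p := (p.1 + c * (p.2 - d), p.2)
  invFun p := (p.1 - c * (p.2 - d), p.2)
  left_inv p := by ext <;> simp
  right_inv p := by ext <;> simp
  continuous_toFun := by continuity
  continuous_invFun := by continuity

lemma shear_measurableEmbedding (c d : ℝ) :
    MeasurableEmbedding (fun p : ℝ × ℝ => (p.1 + c * (p.2 - d), p.2)) :=
  (shearHomeo c d).toMeasurableEquiv.measurableEmbedding

lemma shear_measurePreserving (c d : ℝ) :
    MeasurePreserving (fun p : ℝ × ℝ => (p.1 + c * (p.2 - d), p.2)) volume volume := by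
  have h : MeasurePreserving (fun p : ℝ × ℝ => (p.1, p.2 + c * (p.1 - d)))
      ((volume : Measure ℝ).prod volume) ((volume : Measure ℝ).prod volume) := by
    refine MeasurePreserving.skew_product (f := id) (MeasurePreserving.id _)
      (g := fun a x => x + c * (a - d)) (by fun_prop) (Filter.Eventually.of_forall fun a => ?_)
    exact map_add_right_eq_self volume _
  have h2 := (Measure.measurePreserving_swap (μ := (volume : Measure ℝ)) (ν := volume)).comp
    (h.comp (Measure.measurePreserving_swap (μ := (volume : Measure ℝ)) (ν := volume)))
  rw [MeasureTheory.Measure.volume_eq_prod]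
  exact h2

/-- The shear map as an affine map. -/
noncomputable def shearAff (c d : ℝ) : (ℝ × ℝ) →ᵃ[ℝ] (ℝ × ℝ) where
  toFun p := (p.1 + c * (p.2 - d), p.2)
  linear := LinearMap.prod (LinearMap.fst ℝ ℝ ℝ + c • LinearMap.snd ℝ ℝ ℝ) (LinearMap.snd ℝ ℝ ℝ)
  map_vadd' p v := by ext <;> simp <;> ring

lemma shear_image_convexHull (c d : ℝ) (S : Set (ℝ × ℝ)) :
    (fun p : ℝ × ℝ => (p.1 + c * (p.2 - d), p.2)) '' (convexHull ℝ S)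
      = convexHull ℝ ((fun p : ℝ × ℝ => (p.1 + c * (p.2 - d), p.2)) '' S) :=
  (shearAff c d).image_convexHull S

/-- Basic Cauchy–Schwarz: `(∫ u)² ≤ |P| ∫ u²` on a set of finite measure. -/
lemma cs_key (Pc : Set (ℝ × ℝ)) (hfin : volume Pc ≠ ⊤) (u : ℝ × ℝ → ℝ)
    (hu : IntegrableOn u Pc volume) (huu : IntegrableOn (fun q => u q * u q) Pc volume) :
    (∫ q in Pc, u q) ^ 2 ≤ (volume Pc).toReal * ∫ q in Pc, u q * u q := by
  have h := discrim_le_zero (a := (volume Pc).toReal) (b := -2 * ∫ q in Pc, u q)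
      (c := ∫ q in Pc, u q * u q) ?_
  · rw [discrim] at h; nlinarith [h]
  · intro r
    have hconst : IntegrableOn (fun _ : ℝ × ℝ => r * r) Pc volume :=
      integrableOn_const hfin
    have hexp : (fun q : ℝ × ℝ => (u q - r) * (u q - r))
        = fun q => (u q * u q) + ((-2 * r) * u q + r * r) := by funext q; ring
    have h0 : 0 ≤ ∫ q in Pc, (u q - r) * (u q - r) :=
      integral_nonneg fun q => mul_self_nonneg _
    have hint1 : IntegrableOn (fun q : ℝ × ℝ => (-2 * r) * u q) Pc volume := hu.const_mul _
    have hint2 : IntegrableOn (fun q : ℝ × ℝ => (-2 * r) * u q + r * r) Pc volume :=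
      hint1.add hconst
    rw [hexp, integral_add huu hint2, integral_add hint1 hconst, integral_const_mul,
      setIntegral_const, smul_eq_mul, measureReal_def] at h0
    nlinarith [h0]

/-- The Cauchy–Schwarz inequality giving nonnegativity of the leading coefficient. -/
lemma cs_main (Pc T : Set (ℝ × ℝ)) (hPc : IsCompact Pc) (hT : MeasurableSet T)
    (hTc : IsCompact T) (hTP : T ⊆ Pc) (w : ℝ × ℝ → ℝ) (hw : Continuous w) :
    0 ≤ ((volume Pc).toReal * (∫ q in T, w q * w q) - (∫ q in T, w q) ^ 2)
        * ((volume Pc).toReal * (∫ q in Pc, q.2 * q.2) - (∫ q in Pc, q.2) ^ 2)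
      - ((volume Pc).toReal * (∫ q in T, q.2 * w q)
          - (∫ q in T, w q) * (∫ q in Pc, q.2)) ^ 2 := by
  have hfin : volume Pc ≠ ⊤ := hPc.measure_lt_top.ne
  have hyInt : IntegrableOn (fun q : ℝ × ℝ => q.2) Pc volume :=
    continuous_snd.continuousOn.integrableOn_compact hPc
  have hyyInt : IntegrableOn (fun q : ℝ × ℝ => q.2 * q.2) Pc volume :=
    (continuous_snd.mul continuous_snd).continuousOn.integrableOn_compact hPc
  have hwT : IntegrableOn w T volume := hw.continuousOn.integrableOn_compact hTc
  have hwwT : IntegrableOn (fun q => w q * w q) T volume :=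
    ((hw.mul hw).continuousOn).integrableOn_compact hTc
  have hywT : IntegrableOn (fun q : ℝ × ℝ => q.2 * w q) T volume :=
    ((continuous_snd.mul hw).continuousOn).integrableOn_compact hTc
  have hwiP : IntegrableOn (T.indicator w) Pc volume :=
    (hwT.integrable_indicator hT).integrableOn
  have hwwiP : IntegrableOn (T.indicator fun q => w q * w q) Pc volume :=
    (hwwT.integrable_indicator hT).integrableOn
  have hywiP : IntegrableOn (T.indicator fun q : ℝ × ℝ => q.2 * w q) Pc volume :=
    (hywT.integrable_indicator hT).integrableOn
  have hind : ∀ f : ℝ × ℝ → ℝ, ∫ q in Pc, T.indicator f q = ∫ q in T, f q := by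
    intro f
    rw [setIntegral_indicator hT, inter_eq_self_of_subset_right hTP]
  have quad : ∀ r : ℝ,
      0 ≤ ((volume Pc).toReal * (∫ q in Pc, q.2 * q.2) - (∫ q in Pc, q.2) ^ 2) * (r * r)
        + (2 * ((volume Pc).toReal * (∫ q in T, q.2 * w q)
            - (∫ q in T, w q) * (∫ q in Pc, q.2))) * r
        + ((volume Pc).toReal * (∫ q in T, w q * w q) - (∫ q in T, w q) ^ 2) := by
    intro r
    have hu : IntegrableOn (fun q : ℝ × ℝ => T.indicator w q + r * q.2) Pc volume :=
      hwiP.add (hyInt.const_mul r)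
    have huu_eq : (fun q : ℝ × ℝ =>
          (T.indicator w q + r * q.2) * (T.indicator w q + r * q.2))
        = fun q : ℝ × ℝ => T.indicator (fun q => w q * w q) q
            + ((2 * r) * T.indicator (fun q : ℝ × ℝ => q.2 * w q) q + (r * r) * (q.2 * q.2)) := by
      funext q
      by_cases h : q ∈ T <;>
        simp [Set.indicator_of_mem, Set.indicator_of_notMem, h] <;> ring
    have huu : IntegrableOn (fun q : ℝ × ℝ =>
          (T.indicator w q + r * q.2) * (T.indicator w q + r * q.2)) Pc volume := by
      rw [huu_eq]
      exact hwwiP.add ((hywiP.const_mul _).add (hyyInt.const_mul _))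
    have hcs := cs_key Pc hfin _ hu huu
    have hry : IntegrableOn (fun q : ℝ × ℝ => r * q.2) Pc volume := hyInt.const_mul r
    have e1 : ∫ q in Pc, (T.indicator w q + r * q.2) = (∫ q in T, w q) + r * ∫ q in Pc, q.2 := by
      rw [integral_add hwiP hry, integral_const_mul, hind w]
    have e2 : ∫ q in Pc, (T.indicator w q + r * q.2) * (T.indicator w q + r * q.2)
        = (∫ q in T, w q * w q)
          + (2 * r * (∫ q in T, q.2 * w q) + (r * r) * ∫ q in Pc, q.2 * q.2) := by
      have ha1 : IntegrableOn (fun q : ℝ × ℝ =>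
          (2 * r) * T.indicator (fun q : ℝ × ℝ => q.2 * w q) q) Pc volume := hywiP.const_mul _
      have ha2 : IntegrableOn (fun q : ℝ × ℝ => (r * r) * (q.2 * q.2)) Pc volume :=
        hyyInt.const_mul _
      have ha3 : IntegrableOn (fun q : ℝ × ℝ =>
          (2 * r) * T.indicator (fun q : ℝ × ℝ => q.2 * w q) q + (r * r) * (q.2 * q.2))
          Pc volume := ha1.add ha2
      rw [huu_eq, integral_add hwwiP ha3, integral_add ha1 ha2, integral_const_mul,
        integral_const_mul, hind, hind]
    rw [e1, e2] at hcs
    nlinarith [hcs]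
  have h := discrim_le_zero quad
  rw [discrim] at h
  nlinarith [h]

/-- Determinant of the covariance matrix as a quadratic polynomial in the shear parameter. -/
lemma detQuad (V c ax ay axx axy ayy Tw Txw Tww Tyw : ℝ) (hV : V ≠ 0) :
    (((axx + (2 * Txw * c + Tww * c ^ 2)) / V - ((ax + Tw * c) / V) ^ 2)
        * (ayy / V - ((ay : ℝ) / V) ^ 2)
      - ((axy + Tyw * c) / V - ((ax + Tw * c) / V) * (ay / V)) ^ 2) / V ^ 2
    = ((V * axx - ax ^ 2) * (V * ayy - ay ^ 2) - (V * axy - ax * ay) ^ 2) / V ^ 6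
      + (2 * (V * Txw - ax * Tw) * (V * ayy - ay ^ 2)
          - 2 * (V * axy - ax * ay) * (V * Tyw - Tw * ay)) / V ^ 6 * c
      + ((V * Tww - Tw ^ 2) * (V * ayy - ay ^ 2) - (V * Tyw - Tw * ay) ^ 2) / V ^ 6
          * c ^ 2 := by
  field_simp
  ring

/-- Substituting `c = (t - t0)/lam` into a quadratic. -/
lemma subQuad (E0 E1 E2 lam t0 t : ℝ) (hlam : lam ≠ 0) :
    E0 + E1 * ((t - t0) / lam) + E2 * ((t - t0) / lam) ^ 2
    = E2 / lam ^ 2 * t ^ 2 + (E1 / lam - 2 * t0 * E2 / lam ^ 2) * t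
      + (E0 - t0 * E1 / lam + t0 ^ 2 * E2 / lam ^ 2) := by
  field_simp
  ring

/-- Lemma 6.4: for a Mahler sliding family `P(·)` on the interval `I`,
the map `t ↦ 1/C(P(t))` is a convex quadratic polynomial on `I`. -/
theorem isoC_sliding_quadratic
    (x1 x3 y1 y2 : ℝ) (hx : x3 < x1) (hy : y1 < y2)
    (Phat : Set (ℝ × ℝ)) (hPcomp : IsCompact Phat) (hPconv : Convex ℝ Phat)
    (hPint : (interior Phat).Nonempty)
    (hseg : segment ℝ ((x3 : ℝ), y1) ((x1 : ℝ), y1) ⊆ Phat)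
    (I : Set ℝ) (hI : Convex ℝ I)
    (Δ : ℝ → Set (ℝ × ℝ))
    (hΔ : ∀ t, Δ t = convexHull ℝ ({(x1, y1), (t, y2), (x3, y1)} : Set (ℝ × ℝ)))
    (P : ℝ → Set (ℝ × ℝ))
    (hP : ∀ t, P t = convexHull ℝ (Phat ∪ ({(t, y2)} : Set (ℝ × ℝ))))
    (hdecomp : ∀ t ∈ I, P t = Phat ∪ Δ t ∧ interior Phat ∩ interior (Δ t) = ∅) :
    ∃ a b c : ℝ, 0 ≤ a ∧ ∀ t ∈ I, 1 / isoC (P t) = a * t ^ 2 + b * t + c := by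
  rcases I.eq_empty_or_nonempty with rfl | ⟨t0, ht0⟩
  · exact ⟨0, 0, 0, le_refl 0, fun t ht => absurd ht (notMem_empty t)⟩
  have hlamne : y2 - y1 ≠ 0 := sub_ne_zero.2 (ne_of_gt hy)
  -- triangle facts
  have hΔconv : ∀ t, Convex ℝ (Δ t) := fun t => (hΔ t).symm ▸ convex_convexHull ℝ _
  have hΔcomp : ∀ t, IsCompact (Δ t) := fun t => (hΔ t).symm ▸
    ((((Set.finite_singleton _).insert _).insert _).isCompact_convexHull (𝕜 := ℝ))
  have hΔmeas : ∀ t, MeasurableSet (Δ t) := fun t => (hΔcomp t).isClosed.measurableSet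
  obtain ⟨T, hTdef⟩ : ∃ S, S = Δ t0 := ⟨_, rfl⟩
  have hTc : IsCompact T := hTdef ▸ hΔcomp t0
  have hTm : MeasurableSet T := hTdef ▸ hΔmeas t0
  have hTP : T ⊆ P t0 := by rw [hTdef, (hdecomp t0 ht0).1]; exact subset_union_right
  have hPt0comp : IsCompact (P t0) := by
    rw [(hdecomp t0 ht0).1]; exact hPcomp.union (hΔcomp t0)
  -- null intersections
  have hnull : ∀ t ∈ I, volume (Phat ∩ Δ t) = 0 := by
    intro t ht
    have hsub : Phat ∩ Δ t ⊆ frontier Phat ∪ frontier (Δ t) := by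
      rintro q ⟨h1, h2⟩
      by_cases hq : q ∈ interior Phat
      · right
        rw [(hΔcomp t).isClosed.frontier_eq]
        refine ⟨h2, fun hin => ?_⟩
        have hmem : q ∈ interior Phat ∩ interior (Δ t) := ⟨hq, hin⟩
        rw [(hdecomp t ht).2] at hmem
        exact hmem
      · left
        rw [hPcomp.isClosed.frontier_eq]
        exact ⟨h1, hq⟩
    exact measure_mono_null hsub (measure_union_null (hPconv.addHaar_frontier volume)
      ((hΔconv t).addHaar_frontier volume))
  -- shear description of the triangles
  have hc : ∀ t : ℝ,
      (fun p : ℝ × ℝ => (p.1 + ((t - t0) / (y2 - y1)) * (p.2 - y1), p.2)) '' T = Δ t := by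
    intro t
    rw [hTdef, hΔ t0, shear_image_convexHull, hΔ t]
    rw [Set.image_insert_eq, Set.image_insert_eq, Set.image_singleton]
    have e1 : x1 + (t - t0) / (y2 - y1) * (y1 - y1) = x1 := by
      rw [sub_self, mul_zero, add_zero]
    have e2 : t0 + (t - t0) / (y2 - y1) * (y2 - y1) = t := by
      rw [div_mul_cancel₀ _ hlamne]; ring
    have e3 : x3 + (t - t0) / (y2 - y1) * (y1 - y1) = x3 := by
      rw [sub_self, mul_zero, add_zero]
    rw [e1, e2, e3]
  have hΔint : ∀ (t : ℝ) (f : ℝ × ℝ → ℝ),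
      ∫ q in Δ t, f q = ∫ q in T, f (q.1 + ((t - t0) / (y2 - y1)) * (q.2 - y1), q.2) := by
    intro t f
    rw [← hc t]
    exact (shear_measurePreserving _ _).setIntegral_image_emb
      (shear_measurableEmbedding _ _) f T
  -- integrability helpers
  have hintH : ∀ f : ℝ × ℝ → ℝ, Continuous f → IntegrableOn f Phat volume :=
    fun f hf => hf.continuousOn.integrableOn_compact hPcomp
  have hintT : ∀ f : ℝ × ℝ → ℝ, Continuous f → IntegrableOn f T volume :=
    fun f hf => hf.continuousOn.integrableOn_compact hTc
  -- splitting the integral over `P t`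
  have hsplit : ∀ t ∈ I, ∀ f : ℝ × ℝ → ℝ, Continuous f →
      ∫ q in P t, f q = (∫ q in Phat, f q) + ∫ q in Δ t, f q := by
    intro t ht f hf
    rw [(hdecomp t ht).1]
    exact integral_union_ae (hnull t ht) (hΔmeas t).nullMeasurableSet (hintH f hf)
      (hf.continuousOn.integrableOn_compact (hΔcomp t))
  -- the constants
  obtain ⟨V, hV⟩ : ∃ r : ℝ, r = (volume Phat).toReal + (volume T).toReal := ⟨_, rfl⟩
  obtain ⟨Hx, hHx⟩ : ∃ r : ℝ, r = ∫ q in Phat, q.1 := ⟨_, rfl⟩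
  obtain ⟨Tx, hTx⟩ : ∃ r : ℝ, r = ∫ q in T, q.1 := ⟨_, rfl⟩
  obtain ⟨Hy, hHy⟩ : ∃ r : ℝ, r = ∫ q in Phat, q.2 := ⟨_, rfl⟩
  obtain ⟨Ty, hTy⟩ : ∃ r : ℝ, r = ∫ q in T, q.2 := ⟨_, rfl⟩
  obtain ⟨Hxx, hHxx⟩ : ∃ r : ℝ, r = ∫ q in Phat, q.1 * q.1 := ⟨_, rfl⟩
  obtain ⟨Txx, hTxx⟩ : ∃ r : ℝ, r = ∫ q in T, q.1 * q.1 := ⟨_, rfl⟩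
  obtain ⟨Hxy, hHxy⟩ : ∃ r : ℝ, r = ∫ q in Phat, q.1 * q.2 := ⟨_, rfl⟩
  obtain ⟨Txy, hTxy⟩ : ∃ r : ℝ, r = ∫ q in T, q.1 * q.2 := ⟨_, rfl⟩
  obtain ⟨Hyy, hHyy⟩ : ∃ r : ℝ, r = ∫ q in Phat, q.2 * q.2 := ⟨_, rfl⟩
  obtain ⟨Tyy, hTyy⟩ : ∃ r : ℝ, r = ∫ q in T, q.2 * q.2 := ⟨_, rfl⟩
  obtain ⟨Tw, hTw⟩ : ∃ r : ℝ, r = ∫ q in T, q.2 - y1 := ⟨_, rfl⟩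
  obtain ⟨Txw, hTxw⟩ : ∃ r : ℝ, r = ∫ q in T, q.1 * (q.2 - y1) := ⟨_, rfl⟩
  obtain ⟨Tww, hTww⟩ : ∃ r : ℝ, r = ∫ q in T, (q.2 - y1) * (q.2 - y1) := ⟨_, rfl⟩
  obtain ⟨Tyw, hTyw⟩ : ∃ r : ℝ, r = ∫ q in T, q.2 * (q.2 - y1) := ⟨_, rfl⟩
  -- volume is constant along the family
  have hVol : ∀ t ∈ I, (volume (P t)).toReal = V := by
    intro t ht
    have h2 := hΔint t (fun _ => (1 : ℝ))
    simp only [setIntegral_const, smul_eq_mul, mul_one, Measure.real] at h2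
    rw [(hdecomp t ht).1, measure_union₀ (hΔmeas t).nullMeasurableSet (hnull t ht),
      ENNReal.toReal_add hPcomp.measure_lt_top.ne (hΔcomp t).measure_lt_top.ne, h2, hV]
  -- the moments
  have hMy : ∀ t ∈ I, (∫ q in P t, q.2) = Hy + Ty := by
    intro t ht
    have h1 := hsplit t ht (fun q => q.2) continuous_snd
    have h2 := hΔint t (fun q => q.2)
    simp only at h1 h2
    rw [h1, h2, hHy, hTy]
  have hMyy : ∀ t ∈ I, (∫ q in P t, q.2 * q.2) = Hyy + Tyy := by
    intro t ht
    have h1 := hsplit t ht (fun q => q.2 * q.2) (by fun_prop)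
    have h2 := hΔint t (fun q => q.2 * q.2)
    simp only at h1 h2
    rw [h1, h2, hHyy, hTyy]
  have hMx : ∀ t ∈ I, (∫ q in P t, q.1)
      = (Hx + Tx) + Tw * ((t - t0) / (y2 - y1)) := by
    intro t ht
    have h1 := hsplit t ht (fun q => q.1) continuous_fst
    have h2 := hΔint t (fun q => q.1)
    simp only at h1 h2
    have i1 : IntegrableOn (fun q : ℝ × ℝ => q.1) T volume := hintT _ continuous_fst
    have i2 : IntegrableOn (fun q : ℝ × ℝ => (t - t0) / (y2 - y1) * (q.2 - y1)) T volume :=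
      hintT _ (by fun_prop)
    rw [h1, h2, integral_add i1 i2, integral_const_mul, hHx, hTx, hTw]
    ring
  have hMxy : ∀ t ∈ I, (∫ q in P t, q.1 * q.2)
      = (Hxy + Txy) + Tyw * ((t - t0) / (y2 - y1)) := by
    intro t ht
    have h1 := hsplit t ht (fun q => q.1 * q.2) (by fun_prop)
    have h2 := hΔint t (fun q => q.1 * q.2)
    simp only at h1 h2
    have e : (fun q : ℝ × ℝ => (q.1 + (t - t0) / (y2 - y1) * (q.2 - y1)) * q.2)
        = fun q : ℝ × ℝ => q.1 * q.2 + (t - t0) / (y2 - y1) * (q.2 * (q.2 - y1)) := by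
      funext q; ring
    have i1 : IntegrableOn (fun q : ℝ × ℝ => q.1 * q.2) T volume := hintT _ (by fun_prop)
    have i2 : IntegrableOn
        (fun q : ℝ × ℝ => (t - t0) / (y2 - y1) * (q.2 * (q.2 - y1))) T volume :=
      hintT _ (by fun_prop)
    rw [h1, h2, e, integral_add i1 i2, integral_const_mul, hHxy, hTxy, hTyw]
    ring
  have hMxx : ∀ t ∈ I, (∫ q in P t, q.1 * q.1)
      = (Hxx + Txx) + (2 * Txw * ((t - t0) / (y2 - y1))
        + Tww * ((t - t0) / (y2 - y1)) ^ 2) := by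
    intro t ht
    have h1 := hsplit t ht (fun q => q.1 * q.1) (by fun_prop)
    have h2 := hΔint t (fun q => q.1 * q.1)
    simp only at h1 h2
    have e : (fun q : ℝ × ℝ => (q.1 + (t - t0) / (y2 - y1) * (q.2 - y1))
          * (q.1 + (t - t0) / (y2 - y1) * (q.2 - y1)))
        = fun q : ℝ × ℝ => q.1 * q.1
            + ((2 * ((t - t0) / (y2 - y1))) * (q.1 * (q.2 - y1))
              + ((t - t0) / (y2 - y1) * ((t - t0) / (y2 - y1)))
                * ((q.2 - y1) * (q.2 - y1))) := by
      funext q; ring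
    have i1 : IntegrableOn (fun q : ℝ × ℝ => q.1 * q.1) T volume := hintT _ (by fun_prop)
    have i2 : IntegrableOn
        (fun q : ℝ × ℝ => (2 * ((t - t0) / (y2 - y1))) * (q.1 * (q.2 - y1))) T volume :=
      hintT _ (by fun_prop)
    have i3 : IntegrableOn (fun q : ℝ × ℝ =>
        ((t - t0) / (y2 - y1) * ((t - t0) / (y2 - y1))) * ((q.2 - y1) * (q.2 - y1)))
        T volume := hintT _ (by fun_prop)
    have i23 : IntegrableOn (fun q : ℝ × ℝ =>
        (2 * ((t - t0) / (y2 - y1))) * (q.1 * (q.2 - y1))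
          + ((t - t0) / (y2 - y1) * ((t - t0) / (y2 - y1))) * ((q.2 - y1) * (q.2 - y1)))
        T volume := i2.add i3
    rw [h1, h2, e, integral_add i1 i23, integral_add i2 i3, integral_const_mul,
      integral_const_mul, hHxx, hTxx, hTxw, hTww]
    ring
  -- positivity of the volume
  have hVpos : 0 < V := by
    have h1 : 0 < volume Phat :=
      lt_of_lt_of_le (isOpen_interior.measure_pos volume hPint)
        (measure_mono interior_subset)
    have h2 : 0 < (volume Phat).toReal :=
      ENNReal.toReal_pos h1.ne' hPcomp.measure_lt_top.ne
    have h3 : 0 ≤ (volume T).toReal := ENNReal.toReal_nonneg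
    rw [hV]; linarith
  -- Cauchy–Schwarz
  have hCS := cs_main (P t0) T hPt0comp hTm hTc hTP (fun q => q.2 - y1) (by fun_prop)
  rw [hVol t0 ht0, hMyy t0 ht0, hMy t0 ht0, ← hTw, ← hTww, ← hTyw] at hCS
  -- the witnesses
  refine ⟨((V * Tww - Tw ^ 2) * (V * (Hyy + Tyy) - (Hy + Ty) ^ 2)
        - (V * Tyw - Tw * (Hy + Ty)) ^ 2) / V ^ 6 / (y2 - y1) ^ 2,
    (2 * (V * Txw - (Hx + Tx) * Tw) * (V * (Hyy + Tyy) - (Hy + Ty) ^ 2)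
        - 2 * (V * (Hxy + Txy) - (Hx + Tx) * (Hy + Ty)) * (V * Tyw - Tw * (Hy + Ty))) / V ^ 6
        / (y2 - y1)
      - 2 * t0 * (((V * Tww - Tw ^ 2) * (V * (Hyy + Tyy) - (Hy + Ty) ^ 2)
        - (V * Tyw - Tw * (Hy + Ty)) ^ 2) / V ^ 6) / (y2 - y1) ^ 2,
    ((V * (Hxx + Txx) - (Hx + Tx) ^ 2) * (V * (Hyy + Tyy) - (Hy + Ty) ^ 2)
        - (V * (Hxy + Txy) - (Hx + Tx) * (Hy + Ty)) ^ 2) / V ^ 6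
      - t0 * ((2 * (V * Txw - (Hx + Tx) * Tw) * (V * (Hyy + Tyy) - (Hy + Ty) ^ 2)
        - 2 * (V * (Hxy + Txy) - (Hx + Tx) * (Hy + Ty)) * (V * Tyw - Tw * (Hy + Ty))) / V ^ 6)
        / (y2 - y1)
      + t0 ^ 2 * (((V * Tww - Tw ^ 2) * (V * (Hyy + Tyy) - (Hy + Ty) ^ 2)
        - (V * Tyw - Tw * (Hy + Ty)) ^ 2) / V ^ 6) / (y2 - y1) ^ 2, ?_, ?_⟩
  · have h6 : (0:ℝ) ≤ V ^ 6 := by positivity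
    have h2 : (0:ℝ) ≤ (y2 - y1) ^ 2 := sq_nonneg _
    exact div_nonneg (div_nonneg hCS h6) h2
  · intro t ht
    have h00 : cov2 (P t) 0 0
        = ((Hxx + Txx) + (2 * Txw * ((t - t0) / (y2 - y1))
            + Tww * ((t - t0) / (y2 - y1)) ^ 2)) / V
          - (((Hx + Tx) + Tw * ((t - t0) / (y2 - y1))) / V) ^ 2 := by
      simp only [cov2, Matrix.of_apply, bary2, coord2]
      norm_num
      rw [hVol t ht, hMxx t ht, hMx t ht]
      ring
    have h11 : cov2 (P t) 1 1
        = (Hyy + Tyy) / V - ((Hy + Ty) / V) ^ 2 := by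
      simp only [cov2, Matrix.of_apply, bary2, coord2]
      norm_num
      rw [hVol t ht, hMyy t ht, hMy t ht]
      ring
    have h01 : cov2 (P t) 0 1
        = ((Hxy + Txy) + Tyw * ((t - t0) / (y2 - y1))) / V
          - (((Hx + Tx) + Tw * ((t - t0) / (y2 - y1))) / V) * ((Hy + Ty) / V) := by
      simp only [cov2, Matrix.of_apply, bary2, coord2]
      norm_num
      rw [hVol t ht, hMxy t ht, hMx t ht, hMy t ht]
    have h10 : cov2 (P t) 1 0
        = ((Hxy + Txy) + Tyw * ((t - t0) / (y2 - y1))) / V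
          - (((Hx + Tx) + Tw * ((t - t0) / (y2 - y1))) / V) * ((Hy + Ty) / V) := by
      simp only [cov2, Matrix.of_apply, bary2, coord2]
      norm_num
      rw [show (fun q : ℝ × ℝ => q.2 * q.1) = fun q : ℝ × ℝ => q.1 * q.2 from
        funext fun q => mul_comm _ _]
      rw [hVol t ht, hMxy t ht, hMx t ht, hMy t ht]
      ring
    have hdet2 : (cov2 (P t)).det
        = (((Hxx + Txx) + (2 * Txw * ((t - t0) / (y2 - y1))
              + Tww * ((t - t0) / (y2 - y1)) ^ 2)) / V
            - (((Hx + Tx) + Tw * ((t - t0) / (y2 - y1))) / V) ^ 2)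
          * ((Hyy + Tyy) / V - ((Hy + Ty) / V) ^ 2)
          - (((Hxy + Txy) + Tyw * ((t - t0) / (y2 - y1))) / V
            - (((Hx + Tx) + Tw * ((t - t0) / (y2 - y1))) / V) * ((Hy + Ty) / V)) ^ 2 := by
      rw [Matrix.det_fin_two, h00, h01, h10, h11]
      ring
    simp only [isoC]
    rw [one_div_div, hVol t ht, hdet2,
      detQuad V ((t - t0) / (y2 - y1)) (Hx + Tx) (Hy + Ty) (Hxx + Txx) (Hxy + Txy)
        (Hyy + Tyy) Tw Txw Tww Tyw hVpos.ne']
    exact subQuad _ _ _ (y2 - y1) t0 t hlamne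
end
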